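/- There is a partition of the set of finite subsets of ω₁ into countably many pieces A_i (i ∈ ω) such that for every i and all c, d ∈ A_i, the intersection c ∩ d is an initial segment of c (i.e., every element of c \ d is greater than every element of c ∩ d). -/

import Mathlib

/-- The first uncountable ordinal `ω₁`, as the linear order of countable ordinals. -/
abbrev Omega1 : Type 1 := {o : Ordinal // o < (Cardinal.aleph 1).ord}

open Cardinal in
instance Omega1.countable_below (y : Omega1) : Countable {x : Omega1 // x < y} := by
  have h1 : #(Set.Iio y.val) = Cardinal.lift.{1} y.val.card := Ordinal.mk_Iio_ordinal y.val
  have h2 : y.val.card ≤ ℵ₀ := by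
    have hlt := (Cardinal.lt_ord).mp y.prop
    have h2' : y.val.card < Order.succ ℵ₀ := by rw [Cardinal.succ_aleph0]; exact hlt
    exact Order.lt_succ_iff.mp h2'
  have h3 : #(Set.Iio y.val) ≤ ℵ₀ := by
    rw [h1, ← Cardinal.lift_aleph0.{1,0}]
    exact Cardinal.lift_le.mpr h2
  have hcnt : Countable (Set.Iio y.val) := Cardinal.mk_le_aleph0_iff.mp h3
  have hf : Function.Injective
      (fun x : {x : Omega1 // x < y} => (⟨x.val.val, x.prop⟩ : Set.Iio y.val)) := by
    intro a b hab
    have h := congrArg Subtype.val hab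
    exact Subtype.ext (Subtype.ext h)
  exact hf.countable

noncomputable section

open Classical Cardinal

/-- Injective function from elements below `y` to ℕ. -/
def eFun (y : Omega1) : {x : Omega1 // x < y} → ℕ :=
  (Countable.exists_injective_nat {x : Omega1 // x < y}).choose

lemma eFun_inj (y : Omega1) : Function.Injective (eFun y) :=
  (Countable.exists_injective_nat {x : Omega1 // x < y}).choose_spec

def eD (y x : Omega1) : ℕ := if h : x < y then eFun y ⟨x, h⟩ else 0

lemma eD_inj (y : Omega1) {a b : Omega1} (ha : a < y) (hb : b < y)
    (h : eD y a = eD y b) : a = b := by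
  simp only [eD, dif_pos ha, dif_pos hb] at h
  exact congrArg Subtype.val (eFun_inj y h)

lemma omega1_card_le : Cardinal.lift.{0,1} #Omega1 ≤ Cardinal.lift.{1,0} #(ℕ → Bool) := by
  have h1 : #Omega1 = Cardinal.lift.{1,0} (Cardinal.aleph 1) := by
    have := Ordinal.mk_Iio_ordinal (Cardinal.aleph 1).ord
    rwa [Cardinal.card_ord] at this
  have h2 : #(ℕ → Bool) = Cardinal.continuum := by
    rw [← Cardinal.power_def Bool ℕ, Cardinal.mk_bool, Cardinal.mk_nat]
    exact Cardinal.two_power_aleph0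
  rw [h1, h2, Cardinal.lift_lift]
  exact Cardinal.lift_le.mpr Cardinal.aleph_one_le_continuum

/-- Injection of `Omega1` into `ℕ → Bool`. -/
def gEmb : Omega1 ↪ (ℕ → Bool) := (Cardinal.lift_mk_le'.mp omega1_card_le).some

def gFun : Omega1 → (ℕ → Bool) := gEmb

lemma gFun_inj : Function.Injective gFun := gEmb.injective

lemma gFun_exists_ne {a b : Omega1} (h : a ≠ b) : ∃ m, gFun a m ≠ gFun b m := by
  by_contra hc
  push_neg at hc
  exact h (gFun_inj (funext hc))

/-- Least coordinate where `gFun a` and `gFun b` differ. -/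
def sep (a b : Omega1) : ℕ :=
  if h : a = b then 0 else Nat.find (gFun_exists_ne h)

lemma sep_spec {a b : Omega1} (h : a ≠ b) : gFun a (sep a b) ≠ gFun b (sep a b) := by
  rw [sep, dif_neg h]
  exact Nat.find_spec (gFun_exists_ne h)

/-- Precision level sufficient to separate all pairs in `c`. -/
def KK (c : Finset Omega1) : ℕ := (c.sup fun a => c.sup fun b => sep a b) + 1

lemma sep_lt_KK {c : Finset Omega1} {a b : Omega1} (ha : a ∈ c) (hb : b ∈ c) :
    sep a b < KK c :=
  Nat.lt_succ_of_le (le_trans (Finset.le_sup (f := fun b => sep a b) hb)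
    (Finset.le_sup (f := fun a => c.sup fun b => sep a b) ha))

/-- Pattern of `a` at precision `k`. -/
def pat (k : ℕ) (a : Omega1) : List Bool := (List.range k).map (gFun a)

lemma pat_inj_on {c : Finset Omega1} {a b : Omega1} (ha : a ∈ c) (hb : b ∈ c)
    (h : pat (KK c) a = pat (KK c) b) : a = b := by
  by_contra hne
  have hm : sep a b < KK c := sep_lt_KK ha hb
  have h2 := congrArg (fun l : List Bool => l[sep a b]?) h
  simp only [pat, List.getElem?_map, List.getElem?_range hm, Option.map_some,
    Option.some.injEq] at h2
  exact sep_spec hne h2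

/-- The countable-valued coloring. -/
def CC (c : Finset Omega1) : ℕ × List (List Bool) × List (List ℕ) :=
  let L := c.sort (· ≤ ·)
  (KK c, L.map (pat (KK c)), L.map fun y => (L.filter (fun z => z < y)).map (eD y))

lemma map_injOn_eq {α β : Type*} {f : α → β} : ∀ {l1 l2 : List α},
    l1.map f = l2.map f → (∀ a ∈ l1, ∀ b ∈ l2, f a = f b → a = b) → l1 = l2 := by
  intro l1
  induction l1 with
  | nil => intro l2 h _; cases l2 with
    | nil => rfl
    | cons b t => simp at h
  | cons a t ih =>
    intro l2 h hinj
    cases l2 with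
    | nil => simp at h
    | cons b t2 =>
      simp only [List.map_cons, List.cons.injEq] at h
      have hab : a = b := hinj a List.mem_cons_self b List.mem_cons_self h.1
      have : t = t2 := ih h.2 (fun x hx y hy => hinj x (List.mem_cons_of_mem _ hx)
        y (List.mem_cons_of_mem _ hy))
      rw [hab, this]

end

/-- There is a partition of the finite subsets of `ω₁` into countably many pieces
such that any two sets in the same piece intersect in an initial segment of each:
every element of `c \ d` is greater than every element of `c ∩ d`. -/
theorem stmt_4 : ∃ F : Finset Omega1 → ℕ,
    ∀ c d : Finset Omega1, F c = F d →
      ∀ x ∈ c ∩ d, ∀ y ∈ c, y ∉ d → x < y := by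
  classical
  obtain ⟨ι, hι⟩ := Countable.exists_injective_nat (ℕ × List (List Bool) × List (List ℕ))
  refine ⟨fun c => ι (CC c), ?_⟩
  intro c d hF x hx y hyc hyd
  obtain ⟨hxc, hxd⟩ := Finset.mem_inter.mp hx
  have hC : CC c = CC d := hι hF
  set Lc := c.sort (· ≤ ·) with hLc
  set Ld := d.sort (· ≤ ·) with hLd
  have hK : KK c = KK d := congrArg Prod.fst hC
  have hP : Lc.map (pat (KK c)) = Ld.map (pat (KK d)) := congrArg (fun p => p.2.1) hC
  have hR : (Lc.map fun y => (Lc.filter (fun z => z < y)).map (eD y))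
      = (Ld.map fun y => (Ld.filter (fun z => z < y)).map (eD y)) :=
    congrArg (fun p => p.2.2) hC
  have hlen : Lc.length = Ld.length := by
    have := congrArg List.length hP
    simpa using this
  -- x occurs at some position p in Lc
  have hxLc : x ∈ Lc := (Finset.mem_sort _).mpr hxc
  obtain ⟨p, hp, hgp⟩ := List.mem_iff_getElem.mp hxLc
  have hp' : p < Ld.length := hlen ▸ hp
  -- pattern of x equals pattern of Ld[p]
  have hpat : pat (KK c) x = pat (KK d) Ld[p] := by
    have := congrArg (fun l : List (List Bool) => l[p]?) hP
    simp only [List.getElem?_map, List.getElem?_eq_getElem hp, List.getElem?_eq_getElem hp',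
      Option.map_some] at this
    rw [← hgp]
    exact Option.some.inj this
  have hLdp_mem : Ld[p] ∈ d := (Finset.mem_sort _).mp (List.getElem_mem hp')
  have hLdp : Ld[p] = x := by
    apply pat_inj_on hLdp_mem hxd
    rw [← hK] at hpat ⊢
    exact hpat.symm
  -- the rows agree
  have hrow : (Lc.filter (fun z => z < x)).map (eD x)
      = (Ld.filter (fun z => z < x)).map (eD x) := by
    have := congrArg (fun l : List (List ℕ) => l[p]?) hR
    simp only [List.getElem?_map, List.getElem?_eq_getElem hp, List.getElem?_eq_getElem hp',
      Option.map_some] at this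
    have h2 := Option.some.inj this
    rw [hgp, hLdp] at h2
    exact h2
  have hfil : Lc.filter (fun z => z < x) = Ld.filter (fun z => z < x) := by
    apply map_injOn_eq hrow
    intro a ha b hb hab
    have ha' : a < x := by simpa using (List.mem_filter.mp ha).2
    have hb' : b < x := by simpa using (List.mem_filter.mp hb).2
    exact eD_inj x ha' hb' hab
  -- conclude
  by_contra hlt
  push_neg at hlt
  have hyx : y < x := lt_of_le_of_ne hlt (fun h => hyd (h ▸ hxd))
  have hyf : y ∈ Lc.filter (fun z => z < x) := by
    rw [List.mem_filter]
    exact ⟨(Finset.mem_sort _).mpr hyc, by simpa using hyx⟩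
  rw [hfil] at hyf
  exact hyd ((Finset.mem_sort _).mp (List.mem_filter.mp hyf).1)
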